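/- Let p > p₀(5) and κ be as in the admissible range ((3-p)/(p-1) ≤ κ ≤ 2(p-1) if p<2; 1<κ≤2(p-1) if p≥2). Define for t,r ≥ 0: I₀(t,r) = ∫_0^t ⟨s⟩^{-(p-1)} ∫_{t-s-r}^{t-s+r} ⟨s+|ρ|⟩^{-p} ⟨s-|ρ|⟩^{-p(κ-1)} ⟨ρ⟩ dρ ds. Then there is a constant C such that I₀(t,r) ≤ C r ⟨t+r⟩^{-κ} whenever t ≥ 2r or r ≤ 1, and I₀(t,r) ≤ C ⟨t-r⟩^{-(κ-1)} whenever r ≤ t ≤ 2r and r ≥ 1. -/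

import Mathlib

open MeasureTheory

/-- The integral `I₀` from the nonlinear estimates. -/
noncomputable def I0 (p κ t r : ℝ) : ℝ :=
  ∫ s in (0:ℝ)..t, (1 + |s|) ^ (-(p - 1)) *
    ∫ ρ in (t - s - r)..(t - s + r),
      (1 + |s + abs ρ|) ^ (-p) * (1 + |s - abs ρ|) ^ (-(p * (κ - 1))) * (1 + |ρ|)

section Aux

lemma ii_mono {f g : ℝ → ℝ} {a b : ℝ} (hab : a ≤ b)
    (hg : IntervalIntegrable g volume a b)
    (hg0 : ∀ x ∈ Set.Icc a b, 0 ≤ g x)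
    (hfg : ∀ x ∈ Set.Icc a b, f x ≤ g x) :
    ∫ x in a..b, f x ≤ ∫ x in a..b, g x := by
  by_cases hf : IntervalIntegrable f volume a b
  · exact intervalIntegral.integral_mono_on hab hf hg hfg
  · rw [intervalIntegral.integral_undef hf]
    exact intervalIntegral.integral_nonneg hab hg0

lemma si_mono {f g : ℝ → ℝ} {s : Set ℝ} (hs : MeasurableSet s)
    (hg : IntegrableOn g s) (hg0 : ∀ x ∈ s, 0 ≤ g x) (hfg : ∀ x ∈ s, f x ≤ g x) :
    ∫ x in s, f x ≤ ∫ x in s, g x := by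
  by_cases hf : IntegrableOn f s
  · exact setIntegral_mono_on hf hg hs hfg
  · rw [MeasureTheory.integral_undef hf]
    exact setIntegral_nonneg hs hg0

lemma ii_ext {f : ℝ → ℝ} {a b c : ℝ} (hab : a ≤ b) (hbc : b ≤ c)
    (hf : IntervalIntegrable f volume a c)
    (h0 : ∀ x ∈ Set.Icc a c, 0 ≤ f x) :
    ∫ x in a..b, f x ≤ ∫ x in a..c, f x := by
  have hsub1 : Set.uIcc a b ⊆ Set.uIcc a c := by
    rw [Set.uIcc_of_le hab, Set.uIcc_of_le (hab.trans hbc)]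
    exact Set.Icc_subset_Icc le_rfl hbc
  have hsub2 : Set.uIcc b c ⊆ Set.uIcc a c := by
    rw [Set.uIcc_of_le hbc, Set.uIcc_of_le (hab.trans hbc)]
    exact Set.Icc_subset_Icc hab le_rfl
  have h1 : IntervalIntegrable f volume a b := hf.mono_set hsub1
  have h2 : IntervalIntegrable f volume b c := hf.mono_set hsub2
  rw [← intervalIntegral.integral_add_adjacent_intervals h1 h2]
  have h3 : 0 ≤ ∫ x in b..c, f x :=
    intervalIntegral.integral_nonneg hbc (fun u hu => h0 u ⟨hab.trans hu.1, hu.2⟩)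
  linarith

lemma int_one_add_rpow {e ξ : ℝ} (hξ : 0 ≤ ξ) (he : e ≠ -1) :
    ∫ u in (0:ℝ)..ξ, (1+u)^e = ((1+ξ)^(e+1) - 1)/(e+1) := by
  have h0 : (∫ u in (0:ℝ)..ξ, (1+u)^e) = ∫ x in (0+1:ℝ)..(ξ+1), x ^ e := by
    rw [← intervalIntegral.integral_comp_add_right (fun x => x^e) 1]
    apply intervalIntegral.integral_congr
    intro u _
    simp [add_comm]
  rw [h0, integral_rpow (Or.inr ⟨he, fun h => by
      rw [Set.mem_uIcc] at h
      rcases h with h' | h' <;> [skip; skip] <;> obtain ⟨h1, h2⟩ := h' <;> linarith⟩)]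
  norm_num
  rw [add_comm ξ 1]

lemma primitive_bound {c μ : ℝ} (hc : 0 < c) (hμ0 : 0 ≤ μ) (hμ1 : 1 - c ≤ μ)
    (h : 1 < c ∨ 0 < μ) :
    ∃ K > (0:ℝ), ∀ ξ : ℝ, 0 ≤ ξ → (∫ u in (0:ℝ)..ξ, (1+u)^(-c)) ≤ K * (1+ξ)^μ := by
  rcases h with h | h
  · refine ⟨1/(c-1), one_div_pos.mpr (by linarith), fun ξ hξ => ?_⟩
    rw [int_one_add_rpow hξ (by intro hcon; rw [neg_eq_iff_eq_neg] at hcon; simp at hcon; linarith)]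
    have h1 : (0:ℝ) ≤ (1+ξ)^(-c+1) := Real.rpow_nonneg (by linarith) _
    have h2 : (1:ℝ) ≤ (1+ξ)^μ := Real.one_le_rpow (by linarith) hμ0
    have hne : -c+1 = -(c-1) := by ring
    rw [hne, div_neg]
    have : -(((1+ξ)^(-(c-1)) - 1)/(c-1)) = (1 - (1+ξ)^(-(c-1)))/(c-1) := by ring
    rw [this]
    have hcp : (0:ℝ) < c - 1 := by linarith
    have h1' : (0:ℝ) ≤ (1+ξ)^(-(c-1)) := Real.rpow_nonneg (by linarith) _
    calc (1 - (1+ξ)^(-(c-1)))/(c-1) ≤ 1/(c-1) := by gcongr; linarith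
      _ ≤ 1/(c-1) * (1+ξ)^μ := le_mul_of_one_le_right (by positivity) h2
  · refine ⟨1/μ, by positivity, fun ξ hξ => ?_⟩
    have hstep : (∫ u in (0:ℝ)..ξ, (1+u)^(-c)) ≤ ∫ u in (0:ℝ)..ξ, (1+u)^(μ-1) := by
      apply ii_mono hξ
      · apply ContinuousOn.intervalIntegrable
        apply ContinuousOn.rpow_const
        · exact (continuousOn_const.add continuousOn_id)
        · intro x hx
          rw [Set.uIcc_of_le hξ] at hx
          exact Or.inl (by simp; linarith [hx.1])
      · intro x hx
        exact Real.rpow_nonneg (by linarith [hx.1]) _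
      · intro x hx
        exact Real.rpow_le_rpow_of_exponent_le (by linarith [hx.1]) (by linarith)
    have hc2 : μ - 1 ≠ -1 := by intro hcon; linarith
    rw [int_one_add_rpow hξ hc2] at hstep
    have : μ - 1 + 1 = μ := by ring
    rw [this] at hstep
    have h1 : ((1+ξ)^μ - 1)/μ ≤ (1+ξ)^μ/μ := by gcongr; linarith
    calc (∫ u in (0:ℝ)..ξ, (1+u)^(-c)) ≤ ((1+ξ)^μ - 1)/μ := hstep
      _ ≤ (1+ξ)^μ/μ := h1
      _ = 1/μ * (1+ξ)^μ := by ring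

lemma one_add_rpow_intInt {c : ℝ} {x y : ℝ} (hx : 0 ≤ x) (hxy : x ≤ y) :
    IntervalIntegrable (fun ξ : ℝ => (1+ξ)^(-c)) volume x y := by
  apply ContinuousOn.intervalIntegrable
  apply ContinuousOn.rpow_const (continuousOn_const.add continuousOn_id)
  intro z hz
  rw [Set.uIcc_of_le hxy] at hz
  exact Or.inl (by simp only [Pi.add_apply, id]; intro hcon; linarith [hz.1])

lemma int_tail_bound {c : ℝ} (hc : 1 < c) {α β : ℝ} (h0 : 0 ≤ α) (hαβ : α ≤ β) :
    ∫ ξ in α..β, (1+ξ)^(-c) ≤ (1+α)^(1-c)/(c-1) := by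
  have hβ : 0 ≤ β := h0.trans hαβ
  have hne : -c ≠ -1 := fun hcon => by
    rw [neg_eq_iff_eq_neg] at hcon; simp at hcon; linarith
  have hadd := intervalIntegral.integral_add_adjacent_intervals
    (one_add_rpow_intInt (c := c) le_rfl h0) (one_add_rpow_intInt (c := c) h0 hαβ)
  rw [eq_comm, ← sub_eq_iff_eq_add'] at hadd
  rw [← hadd, int_one_add_rpow h0 hne, int_one_add_rpow hβ hne]
  have hd1 : (1:ℝ) - c ≠ 0 := by intro hcon; linarith
  have hd2 : c - 1 ≠ 0 := by intro hcon; linarith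
  set A := (1+α)^(-c+1) with hA
  set B := (1+β)^(-c+1) with hB
  have hBpos : 0 ≤ B := Real.rpow_nonneg (by linarith) _
  have hkey : (B-1)/(-c+1) - (A-1)/(-c+1) = (A-B)/(c-1) := by
    rw [div_sub_div_same, show (-c+1:ℝ) = -(c-1) by ring, div_neg, ← neg_div]
    congr 1
    ring
  rw [hkey]
  have : (1+α)^(1-c) = A := by rw [hA, show (1-c:ℝ) = -c+1 by ring]
  rw [this]
  gcongr
  · linarith

lemma conv_bound {a b lam μa μb : ℝ} (ha : 0 < a) (hb : 0 < b)
    (hμb0 : 0 ≤ μb) (hμb1 : 1 - b ≤ μb) (hμb2 : 1 < b ∨ 0 < μb) (hμb3 : μb ≤ a - lam)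
    (hμa0 : 0 ≤ μa) (hμa1 : 1 - a ≤ μa) (hμa2 : 1 < a ∨ 0 < μa) (hμa3 : μa ≤ b - lam) :
    ∃ C > (0:ℝ), ∀ ξ : ℝ, 0 ≤ ξ →
      (∫ η in (-ξ)..ξ, (1+|ξ-η|)^(-a) * (1+|η|)^(-b)) ≤ C * (1+ξ)^(-lam) := by
  obtain ⟨Kb, hKb, hKb'⟩ := primitive_bound hb hμb0 hμb1 hμb2
  obtain ⟨Ka, hKa, hKa'⟩ := primitive_bound ha hμa0 hμa1 hμa2
  have h2pos : (0:ℝ) < 2 := by norm_num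
  refine ⟨2^(a+1) * Kb + 2^b * Ka, by positivity, fun ξ hξ => ?_⟩
  have hbase : (0:ℝ) < 1 + ξ := by linarith
  have hcont1 : Continuous (fun η : ℝ => (1+|ξ-η|)^(-a)) := by
    apply Continuous.rpow_const (continuous_const.add (continuous_const.sub continuous_id).abs)
    intro x; exact Or.inl (by simp only [Pi.add_apply, Pi.sub_apply, Pi.mul_apply, id]; positivity)
  have hcont2 : Continuous (fun η : ℝ => (1+|η|)^(-b)) := by
    apply Continuous.rpow_const (continuous_const.add continuous_abs)
    intro x; exact Or.inl (by simp only [Pi.add_apply, Pi.sub_apply, Pi.mul_apply, id]; positivity)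
  have hcont : Continuous (fun η : ℝ => (1+|ξ-η|)^(-a) * (1+|η|)^(-b)) := hcont1.mul hcont2
  have hh : -ξ ≤ ξ/2 := by linarith
  have hh2 : ξ/2 ≤ ξ := by linarith
  rw [← intervalIntegral.integral_add_adjacent_intervals
      (hcont.intervalIntegrable (-ξ) (ξ/2)) (hcont.intervalIntegrable (ξ/2) ξ)]
  have hhalf : ((1+ξ)/2)^(-a) = 2^a * (1+ξ)^(-a) := by
    rw [Real.div_rpow (by linarith) (by norm_num), Real.rpow_neg (le_of_lt h2pos),
      div_eq_mul_inv, inv_inv, mul_comm]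
  have hhalfb : ((1+ξ)/2)^(-b) = 2^b * (1+ξ)^(-b) := by
    rw [Real.div_rpow (by linarith) (by norm_num), Real.rpow_neg (le_of_lt h2pos),
      div_eq_mul_inv, inv_inv, mul_comm]
  -- Part 1
  have hP1 : (∫ η in (-ξ)..(ξ/2), (1+|ξ-η|)^(-a) * (1+|η|)^(-b))
      ≤ (2^a * (1+ξ)^(-a)) * (2 * (Kb * (1+ξ)^μb)) := by
    have step1 : (∫ η in (-ξ)..(ξ/2), (1+|ξ-η|)^(-a) * (1+|η|)^(-b))
        ≤ ∫ η in (-ξ)..(ξ/2), (2^a * (1+ξ)^(-a)) * (1+|η|)^(-b) := by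
      apply ii_mono hh ((continuous_const.mul hcont2).intervalIntegrable _ _)
      · intro x _; simp only [Pi.mul_apply]; positivity
      · intro x hx
        apply mul_le_mul_of_nonneg_right ?_ (Real.rpow_nonneg (by positivity) _)
        rw [← hhalf]
        apply Real.rpow_le_rpow_of_nonpos (by linarith) ?_ (by linarith)
        have h1 : ξ/2 ≤ ξ - x := by linarith [hx.2]
        have h2 : 0 ≤ ξ - x := by linarith
        rw [abs_of_nonneg h2]; linarith
    have step2 : (∫ η in (-ξ)..(ξ/2), (1+|η|)^(-b)) ≤ 2 * (Kb * (1+ξ)^μb) := by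
      have e1 : (∫ η in (-ξ)..(ξ/2), (1+|η|)^(-b)) ≤ ∫ η in (-ξ)..ξ, (1+|η|)^(-b) :=
        ii_ext hh hh2 (hcont2.intervalIntegrable _ _) (fun x _ => Real.rpow_nonneg (by positivity) _)
      have e2 : (∫ η in (-ξ)..(0:ℝ), (1+|η|)^(-b)) = ∫ η in (0:ℝ)..ξ, (1+|η|)^(-b) := by
        have e2' := intervalIntegral.integral_comp_neg (a := (0:ℝ)) (b := ξ)
          (fun η => (1+|η|)^(-b))
        simp only [neg_zero, abs_neg] at e2'
        exact e2'.symm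
      have e3 : (∫ η in (0:ℝ)..ξ, (1+|η|)^(-b)) = ∫ η in (0:ℝ)..ξ, (1+η)^(-b) := by
        apply intervalIntegral.integral_congr
        intro x hx
        rw [Set.uIcc_of_le hξ] at hx
        simp [abs_of_nonneg hx.1]
      have e4 : (∫ η in (-ξ)..ξ, (1+|η|)^(-b))
          = (∫ η in (-ξ)..(0:ℝ), (1+|η|)^(-b)) + ∫ η in (0:ℝ)..ξ, (1+|η|)^(-b) :=
        (intervalIntegral.integral_add_adjacent_intervals
          (hcont2.intervalIntegrable _ _) (hcont2.intervalIntegrable _ _)).symm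
      have := hKb' ξ hξ
      rw [e3] at e2
      calc (∫ η in (-ξ)..(ξ/2), (1+|η|)^(-b)) ≤ _ := e1
        _ = _ + _ := e4
        _ = (∫ η in (0:ℝ)..ξ, (1+η)^(-b)) + (∫ η in (0:ℝ)..ξ, (1+η)^(-b)) := by rw [e2, e3]
        _ ≤ Kb * (1+ξ)^μb + Kb * (1+ξ)^μb := by have h := hKb' ξ hξ; linarith
        _ = 2 * (Kb * (1+ξ)^μb) := by ring
    calc (∫ η in (-ξ)..(ξ/2), (1+|ξ-η|)^(-a) * (1+|η|)^(-b))
        ≤ ∫ η in (-ξ)..(ξ/2), (2^a * (1+ξ)^(-a)) * (1+|η|)^(-b) := step1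
      _ = (2^a * (1+ξ)^(-a)) * ∫ η in (-ξ)..(ξ/2), (1+|η|)^(-b) := by
          rw [intervalIntegral.integral_const_mul]
      _ ≤ (2^a * (1+ξ)^(-a)) * (2 * (Kb * (1+ξ)^μb)) := by
          apply mul_le_mul_of_nonneg_left step2 (by positivity)
  -- Part 2
  have hP2 : (∫ η in (ξ/2)..ξ, (1+|ξ-η|)^(-a) * (1+|η|)^(-b))
      ≤ (2^b * (1+ξ)^(-b)) * (Ka * (1+ξ)^μa) := by
    have step1 : (∫ η in (ξ/2)..ξ, (1+|ξ-η|)^(-a) * (1+|η|)^(-b))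
        ≤ ∫ η in (ξ/2)..ξ, (1+|ξ-η|)^(-a) * (2^b * (1+ξ)^(-b)) := by
      apply ii_mono hh2 ((hcont1.mul continuous_const).intervalIntegrable _ _)
      · intro x _; simp only [Pi.mul_apply]; positivity
      · intro x hx
        apply mul_le_mul_of_nonneg_left ?_ (Real.rpow_nonneg (by positivity) _)
        rw [← hhalfb]
        apply Real.rpow_le_rpow_of_nonpos (by linarith) ?_ (by linarith)
        have h2 : 0 ≤ x := by linarith [hx.1]
        rw [abs_of_nonneg h2]; linarith [hx.1]
    have step2 : (∫ η in (ξ/2)..ξ, (1+|ξ-η|)^(-a)) ≤ Ka * (1+ξ)^μa := by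
      have e1 : (∫ η in (ξ/2)..ξ, (1+|ξ-η|)^(-a))
          = ∫ u in (ξ-ξ)..(ξ-ξ/2), (1+|u|)^(-a) :=
        intervalIntegral.integral_comp_sub_left (fun u => (1+|u|)^(-a)) ξ
      have e2 : (∫ u in (ξ-ξ)..(ξ-ξ/2), (1+|u|)^(-a)) = ∫ u in (0:ℝ)..(ξ/2), (1+u)^(-a) := by
        rw [show ξ - ξ = (0:ℝ) by ring, show ξ - ξ/2 = ξ/2 by ring]
        apply intervalIntegral.integral_congr
        intro x hx
        rw [Set.uIcc_of_le (by linarith : (0:ℝ) ≤ ξ/2)] at hx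
        simp [abs_of_nonneg hx.1]
      rw [e1, e2]
      calc (∫ u in (0:ℝ)..(ξ/2), (1+u)^(-a)) ≤ Ka * (1+ξ/2)^μa := hKa' (ξ/2) (by linarith)
        _ ≤ Ka * (1+ξ)^μa := by
            apply mul_le_mul_of_nonneg_left ?_ (le_of_lt hKa)
            exact Real.rpow_le_rpow (by linarith) (by linarith) hμa0
    calc (∫ η in (ξ/2)..ξ, (1+|ξ-η|)^(-a) * (1+|η|)^(-b))
        ≤ ∫ η in (ξ/2)..ξ, (1+|ξ-η|)^(-a) * (2^b * (1+ξ)^(-b)) := step1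
      _ = (∫ η in (ξ/2)..ξ, (1+|ξ-η|)^(-a)) * (2^b * (1+ξ)^(-b)) := by
          rw [intervalIntegral.integral_mul_const]
      _ ≤ (Ka * (1+ξ)^μa) * (2^b * (1+ξ)^(-b)) := by
          apply mul_le_mul_of_nonneg_right step2 (by positivity)
      _ = (2^b * (1+ξ)^(-b)) * (Ka * (1+ξ)^μa) := by ring
  -- combine
  have hone : (1:ℝ) ≤ 1 + ξ := by linarith
  have c1 : (2^a * (1+ξ)^(-a)) * (2 * (Kb * (1+ξ)^μb)) = 2^(a+1) * Kb * (1+ξ)^(-a+μb) := by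
    rw [Real.rpow_add h2pos, Real.rpow_one, Real.rpow_add hbase]
    ring
  have c2 : (2^b * (1+ξ)^(-b)) * (Ka * (1+ξ)^μa) = 2^b * Ka * (1+ξ)^(-b+μa) := by
    rw [Real.rpow_add hbase]
    ring
  have d1 : (1+ξ)^(-a+μb) ≤ (1+ξ)^(-lam) :=
    Real.rpow_le_rpow_of_exponent_le hone (by linarith)
  have d2 : (1+ξ)^(-b+μa) ≤ (1+ξ)^(-lam) :=
    Real.rpow_le_rpow_of_exponent_le hone (by linarith)
  have hKb2 : (0:ℝ) ≤ 2^(a+1) * Kb := by positivity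
  have hKa2 : (0:ℝ) ≤ 2^b * Ka := by positivity
  calc (∫ η in (-ξ)..(ξ/2), (1+|ξ-η|)^(-a) * (1+|η|)^(-b))
        + (∫ η in (ξ/2)..ξ, (1+|ξ-η|)^(-a) * (1+|η|)^(-b))
      ≤ (2^a * (1+ξ)^(-a)) * (2 * (Kb * (1+ξ)^μb)) + (2^b * (1+ξ)^(-b)) * (Ka * (1+ξ)^μa) := by
        linarith
    _ = 2^(a+1) * Kb * (1+ξ)^(-a+μb) + 2^b * Ka * (1+ξ)^(-b+μa) := by rw [c1, c2]
    _ ≤ 2^(a+1) * Kb * (1+ξ)^(-lam) + 2^b * Ka * (1+ξ)^(-lam) := by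
        have := mul_le_mul_of_nonneg_left d1 hKb2
        have := mul_le_mul_of_nonneg_left d2 hKa2
        linarith
    _ = (2^(a+1) * Kb + 2^b * Ka) * (1+ξ)^(-lam) := by ring

lemma conv_main {p κ : ℝ} (hp : (3 + Real.sqrt 17) / 4 < p)
    (hκ1 : p < 2 → (3 - p) / (p - 1) ≤ κ ∧ κ ≤ 2 * (p - 1))
    (hκ2 : 2 ≤ p → 1 < κ ∧ κ ≤ 2 * (p - 1)) :
    ∃ C > (0:ℝ), ∀ ξ : ℝ, 0 ≤ ξ →
      (∫ η in (-ξ)..ξ, (1+|ξ-η|)^(-(p-1)) * (1+|η|)^(-(p*(κ-1))))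
        ≤ C * (1+ξ)^(-(κ+1-p)) := by
  have hs17 : Real.sqrt 17 > 4 := by
    nlinarith [Real.sq_sqrt (show (0:ℝ) ≤ 17 by norm_num), Real.sqrt_nonneg 17]
  have hp74 : 7/4 < p := by nlinarith
  have hp1 : 1 < p := by linarith
  have hquad : 1 + 3*p < 2*p^2 := by
    nlinarith [Real.sq_sqrt (show (0:ℝ) ≤ 17 by norm_num), Real.sqrt_nonneg 17]
  have hκgt1 : 1 < κ := by
    rcases lt_or_ge p 2 with h | h
    · have h1 := (hκ1 h).1
      have h2 : 1 < (3 - p) / (p - 1) := by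
        rw [lt_div_iff₀ (by linarith)]; linarith
      linarith
    · exact (hκ2 h).1
  have hκub : κ ≤ 2 * (p - 1) := by
    rcases lt_or_ge p 2 with h | h
    · exact (hκ1 h).2
    · exact (hκ2 h).2
  have hkey : 3 - p ≤ κ * (p - 1) := by
    rcases lt_or_ge p 2 with h | h
    · have h1 := (hκ1 h).1
      rw [div_le_iff₀ (by linarith)] at h1
      linarith
    · nlinarith
  have hkey2 : 1 < κ * (p - 1) := by
    rcases lt_or_ge p 2 with h | h
    · linarith
    · nlinarith
  have ha : 0 < p - 1 := by linarith
  have hb : 0 < p * (κ - 1) := mul_pos (by linarith) (by linarith)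
  rcases le_or_gt (p * (κ - 1)) 1 with hble | hbgt
  · have hμbpos : 0 < (p-1) - (κ+1-p) := by nlinarith
    rcases le_or_gt p 2 with hple | hpgt
    · exact conv_bound (μb := (p-1) - (κ+1-p)) (μa := p*(κ-1) - (κ+1-p)) ha hb
        (le_of_lt hμbpos) (by nlinarith) (Or.inr hμbpos) le_rfl
        (by nlinarith) (by nlinarith) (Or.inr (by nlinarith)) le_rfl
    · exact conv_bound (μb := (p-1) - (κ+1-p)) (μa := 0) ha hb
        (le_of_lt hμbpos) (by nlinarith) (Or.inr hμbpos) le_rfl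
        le_rfl (by linarith) (Or.inl (by linarith)) (by nlinarith)
  · rcases le_or_gt p 2 with hple | hpgt
    · exact conv_bound (μb := 0) (μa := p*(κ-1) - (κ+1-p)) ha hb
        le_rfl (by linarith) (Or.inl hbgt) (by linarith)
        (by nlinarith) (by nlinarith) (Or.inr (by nlinarith)) le_rfl
    · exact conv_bound (μb := 0) (μa := 0) ha hb
        le_rfl (by linarith) (Or.inl hbgt) (by linarith)
        le_rfl (by linarith) (Or.inl (by linarith)) (by nlinarith)

noncomputable def psiF (p κ s ξ : ℝ) : ℝ :=
  (1+|ξ|)^(-p) * (1+|2*s-ξ|)^(-(p*(κ-1))) * (1+(ξ-s))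

lemma psiF_cont (p κ ξ : ℝ) : Continuous (fun s => psiF p κ s ξ) := by
  unfold psiF
  apply Continuous.mul
  apply Continuous.mul continuous_const
  · apply Continuous.rpow_const
    · exact continuous_const.add ((continuous_const.mul continuous_id).sub continuous_const).abs
    · intro x; exact Or.inl (by positivity)
  · exact continuous_const.add (continuous_const.sub continuous_id)

lemma psiF_cont' (p κ s : ℝ) : Continuous (fun ξ => psiF p κ s ξ) := by
  unfold psiF
  apply Continuous.mul
  apply Continuous.mul
  · apply Continuous.rpow_const (continuous_const.add continuous_abs)
    intro x; exact Or.inl (by simp only [Pi.add_apply, Pi.sub_apply, Pi.mul_apply, id]; positivity)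
  · apply Continuous.rpow_const
    · exact continuous_const.add (continuous_const.sub continuous_id).abs
    · intro x; exact Or.inl (by positivity)
  · exact continuous_const.add (continuous_id.sub continuous_const)

lemma Kxi_bound {p κ : ℝ} (hp1 : 1 < p) {C : ℝ} (hC0 : 0 < C)
    (hC : ∀ ξ : ℝ, 0 ≤ ξ →
      (∫ η in (-ξ)..ξ, (1+|ξ-η|)^(-(p-1)) * (1+|η|)^(-(p*(κ-1))))
        ≤ C * (1+ξ)^(-(κ+1-p)))
    (ξ : ℝ) (hξ : 0 ≤ ξ) :
    (∫ s in (0:ℝ)..ξ, (1+|s|)^(-(p-1)) * psiF p κ s ξ)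
      ≤ (2^(p-1) * C) * (1+ξ)^(-κ) := by
  set b := p*(κ-1) with hbdef
  set F : ℝ → ℝ := fun u => (1+|ξ+u|)^(-(p-1)) * (1+|u|)^(-b) with hFdef
  have hbase : (0:ℝ) < 1 + ξ := by linarith
  have hFcont : Continuous F := by
    apply Continuous.mul
    · apply Continuous.rpow_const (continuous_const.add (continuous_const.add continuous_id).abs)
      intro x; exact Or.inl (by simp only [Pi.add_apply, Pi.sub_apply, Pi.mul_apply, id]; positivity)
    · apply Continuous.rpow_const (continuous_const.add continuous_abs)
      intro x; exact Or.inl (by simp only [Pi.add_apply, Pi.sub_apply, Pi.mul_apply, id]; positivity)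
  set cξ : ℝ := 2^(p-1) * ((1+ξ)^(-p) * (1+ξ)) with hcdef
  have hc0 : 0 ≤ cξ := by positivity
  have step1 : (∫ s in (0:ℝ)..ξ, (1+|s|)^(-(p-1)) * psiF p κ s ξ)
      ≤ ∫ s in (0:ℝ)..ξ, cξ * F (2*s + -ξ) := by
    apply ii_mono hξ
    · exact (continuous_const.mul (hFcont.comp ((continuous_const.mul continuous_id).add
        continuous_const))).intervalIntegrable _ _
    · intro x _
      apply mul_nonneg hc0
      apply mul_nonneg (Real.rpow_nonneg (by positivity) _) (Real.rpow_nonneg (by positivity) _)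
    · intro s hs
      obtain ⟨hs0, hsξ⟩ := hs
      have hFs : F (2*s + -ξ) = (1+(2*s))^(-(p-1)) * (1+|2*s-ξ|)^(-b) := by
        simp only [hFdef]
        rw [show ξ + (2*s + -ξ) = 2*s by ring, show (2*s + -ξ) = 2*s - ξ by ring,
          abs_of_nonneg (by linarith : (0:ℝ) ≤ 2*s)]
      have h1 : (1+|s|)^(-(p-1)) ≤ 2^(p-1) * (1+(2*s))^(-(p-1)) := by
        have hhalf : ((1+(2*s))/2)^(-(p-1)) = 2^(p-1) * (1+(2*s))^(-(p-1)) := by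
          rw [Real.div_rpow (by linarith) (by norm_num), Real.rpow_neg (by norm_num : (0:ℝ) ≤ 2),
            div_eq_mul_inv, inv_inv, mul_comm]
        rw [← hhalf, abs_of_nonneg hs0]
        exact Real.rpow_le_rpow_of_nonpos (by linarith) (by linarith) (by linarith)
      have h2 : 1 + (ξ - s) ≤ 1 + ξ := by linarith
      have hAE : (1+|s|)^(-(p-1)) * (1+(ξ-s)) ≤ (2^(p-1) * (1+(2*s))^(-(p-1))) * (1+ξ) := by
        apply mul_le_mul h1 h2 (by linarith) (by positivity)
      have hDB : (0:ℝ) ≤ (1+|ξ|)^(-p) * (1+|2*s-ξ|)^(-b) :=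
        mul_nonneg (Real.rpow_nonneg (by positivity) _) (Real.rpow_nonneg (by positivity) _)
      calc (1+|s|)^(-(p-1)) * psiF p κ s ξ
          = ((1+|s|)^(-(p-1)) * (1+(ξ-s))) * ((1+|ξ|)^(-p) * (1+|2*s-ξ|)^(-b)) := by
            unfold psiF; ring
        _ ≤ ((2^(p-1) * (1+(2*s))^(-(p-1))) * (1+ξ)) * ((1+|ξ|)^(-p) * (1+|2*s-ξ|)^(-b)) :=
            mul_le_mul_of_nonneg_right hAE hDB
        _ = cξ * F (2*s + -ξ) := by
            rw [hFs, hcdef, abs_of_nonneg hξ]; ring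
  have step2 : (∫ s in (0:ℝ)..ξ, cξ * F (2*s + -ξ)) = cξ * (2⁻¹ * ∫ u in (-ξ)..ξ, F u) := by
    rw [intervalIntegral.integral_const_mul]
    congr 1
    have h := intervalIntegral.integral_comp_mul_add (a := (0:ℝ)) (b := ξ) F
      (by norm_num : (2:ℝ) ≠ 0) (-ξ)
    rw [h, smul_eq_mul, show 2*(0:ℝ) + -ξ = -ξ by ring, show 2*ξ + -ξ = ξ by ring]
  have step3 : (∫ u in (-ξ)..ξ, F u)
      = ∫ η in (-ξ)..ξ, (1+|ξ-η|)^(-(p-1)) * (1+|η|)^(-b) := by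
    have := intervalIntegral.integral_comp_neg (a := -ξ) (b := ξ)
      (fun η => (1+|ξ-η|)^(-(p-1)) * (1+|η|)^(-b))
    simp only [neg_neg] at this
    rw [← this]
    apply intervalIntegral.integral_congr
    intro x _
    simp only [F, abs_neg, sub_neg_eq_add]
  have step4 := hC ξ hξ
  calc (∫ s in (0:ℝ)..ξ, (1+|s|)^(-(p-1)) * psiF p κ s ξ)
      ≤ ∫ s in (0:ℝ)..ξ, cξ * F (2*s + -ξ) := step1
    _ = cξ * (2⁻¹ * ∫ u in (-ξ)..ξ, F u) := step2
    _ ≤ cξ * (2⁻¹ * (C * (1+ξ)^(-(κ+1-p)))) := by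
        apply mul_le_mul_of_nonneg_left ?_ hc0
        apply mul_le_mul_of_nonneg_left ?_ (by norm_num)
        rw [step3]; exact step4
    _ = (2^(p-1) * C) * (2⁻¹ * ((1+ξ)^(-p) * ((1+ξ)^(1:ℝ) * (1+ξ)^(-(κ+1-p))))) := by
        rw [hcdef, Real.rpow_one]; ring
    _ = (2^(p-1) * C) * (2⁻¹ * (1+ξ)^(-κ)) := by
        rw [← Real.rpow_add hbase, ← Real.rpow_add hbase]
        congr 2
        ring
    _ ≤ (2^(p-1) * C) * (1+ξ)^(-κ) := by
        have h1 : (0:ℝ) ≤ (1+ξ)^(-κ) := Real.rpow_nonneg (by linarith) _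
        have h2 : 2⁻¹ * (1+ξ)^(-κ) ≤ (1+ξ)^(-κ) := by linarith
        apply mul_le_mul_of_nonneg_left h2 (by positivity)

lemma psiF_nonneg {p κ s ξ : ℝ} (hsξ : s ≤ ξ) : 0 ≤ psiF p κ s ξ := by
  unfold psiF
  have h1 : (0:ℝ) ≤ (1+|ξ|)^(-p) := Real.rpow_nonneg (by positivity) _
  have h2 : (0:ℝ) ≤ (1+|2*s-ξ|)^(-(p*(κ-1))) := Real.rpow_nonneg (by positivity) _
  have h3 : (0:ℝ) ≤ 1+(ξ-s) := by linarith
  positivity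

lemma claim1 {p κ t r s : ℝ} (hs0 : 0 ≤ s) (hst : s ≤ t) (hr : 0 ≤ r) :
    (∫ ρ in (t-s-r)..(t-s+r), (1+|s + abs ρ|)^(-p) * (1+|s - abs ρ|)^(-(p*(κ-1))) * (1+|ρ|))
      ≤ 2 * ∫ ξ in (max (t-r) s)..(t+r), psiF p κ s ξ := by
  have hφcont : Continuous
      (fun ρ : ℝ => (1+|s + abs ρ|)^(-p) * (1+|s - abs ρ|)^(-(p*(κ-1))) * (1+|ρ|)) := by
    apply Continuous.mul
    apply Continuous.mul
    · apply Continuous.rpow_const (continuous_const.add (continuous_const.add continuous_abs).abs)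
      intro x; exact Or.inl (by simp only [Pi.add_apply, Pi.sub_apply, Pi.mul_apply, id]; positivity)
    · apply Continuous.rpow_const (continuous_const.add (continuous_const.sub continuous_abs).abs)
      intro x; exact Or.inl (by simp only [Pi.add_apply, Pi.sub_apply, Pi.mul_apply, id]; positivity)
    · exact continuous_const.add continuous_abs
  have hidpos : ∀ ρ : ℝ, 0 ≤ ρ →
      (1+|s + abs ρ|)^(-p) * (1+|s - abs ρ|)^(-(p*(κ-1))) * (1+|ρ|) = psiF p κ s (ρ+s) := by
    intro ρ hρ
    unfold psiF
    rw [show 2*s-(ρ+s) = s - ρ by ring, show ρ+s-s = ρ by ring, show ρ+s = s+ρ by ring,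
      abs_of_nonneg hρ]
  have hidneg : ∀ ρ : ℝ, ρ ≤ 0 →
      (1+|s + abs ρ|)^(-p) * (1+|s - abs ρ|)^(-(p*(κ-1))) * (1+|ρ|) = psiF p κ s (s-ρ) := by
    intro ρ hρ
    unfold psiF
    rw [show 2*s-(s-ρ) = s + ρ by ring, show s-ρ-s = -ρ by ring, abs_of_nonpos hρ,
      show s - ρ = s + -ρ by ring, show s + ρ = s - -ρ by ring]
  rcases le_or_gt r (t-s) with hcase | hcase
  · -- all ρ ≥ 0
    have hmax : max (t-r) s = t-r := max_eq_left (by linarith)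
    have hle : t-s-r ≤ t-s+r := by linarith
    have e1 : (∫ ρ in (t-s-r)..(t-s+r), (1+|s + abs ρ|)^(-p) * (1+|s - abs ρ|)^(-(p*(κ-1))) * (1+|ρ|))
        = ∫ ρ in (t-s-r)..(t-s+r), (fun ξ => psiF p κ s ξ) (ρ+s) := by
      apply intervalIntegral.integral_congr
      intro ρ hρ
      rw [Set.uIcc_of_le hle] at hρ
      exact hidpos ρ (by linarith [hρ.1])
    rw [e1, intervalIntegral.integral_comp_add_right (fun ξ => psiF p κ s ξ) s,
      show t-s-r+s = t-r by ring, show t-s+r+s = t+r by ring, hmax]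
    have h0 : 0 ≤ ∫ ξ in (t-r)..(t+r), psiF p κ s ξ := by
      apply intervalIntegral.integral_nonneg (by linarith)
      intro u hu
      exact psiF_nonneg (by linarith [hu.1])
    linarith
  · have hmax : max (t-r) s = s := max_eq_right (by linarith)
    rw [hmax]
    have hInt : ∀ x y : ℝ, IntervalIntegrable
        (fun ρ : ℝ => (1+|s + abs ρ|)^(-p) * (1+|s - abs ρ|)^(-(p*(κ-1))) * (1+|ρ|)) volume x y :=
      fun x y => hφcont.intervalIntegrable x y
    rw [← intervalIntegral.integral_add_adjacent_intervals (hInt (t-s-r) 0) (hInt 0 (t-s+r))]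
    have eA : (∫ ρ in (0:ℝ)..(t-s+r), (1+|s + abs ρ|)^(-p) * (1+|s - abs ρ|)^(-(p*(κ-1))) * (1+|ρ|))
        = ∫ ξ in s..(t+r), psiF p κ s ξ := by
      have e1 : (∫ ρ in (0:ℝ)..(t-s+r), (1+|s + abs ρ|)^(-p) * (1+|s - abs ρ|)^(-(p*(κ-1))) * (1+|ρ|))
          = ∫ ρ in (0:ℝ)..(t-s+r), (fun ξ => psiF p κ s ξ) (ρ+s) := by
        apply intervalIntegral.integral_congr
        intro ρ hρ
        rw [Set.uIcc_of_le (by linarith : (0:ℝ) ≤ t-s+r)] at hρ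
        exact hidpos ρ hρ.1
      rw [e1, intervalIntegral.integral_comp_add_right (fun ξ => psiF p κ s ξ) s,
        show (0:ℝ)+s = s by ring, show t-s+r+s = t+r by ring]
    have eB : (∫ ρ in (t-s-r)..(0:ℝ), (1+|s + abs ρ|)^(-p) * (1+|s - abs ρ|)^(-(p*(κ-1))) * (1+|ρ|))
        = ∫ ξ in s..(2*s+r-t), psiF p κ s ξ := by
      have e1 : (∫ ρ in (t-s-r)..(0:ℝ), (1+|s + abs ρ|)^(-p) * (1+|s - abs ρ|)^(-(p*(κ-1))) * (1+|ρ|))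
          = ∫ ρ in (t-s-r)..(0:ℝ), (fun ξ => psiF p κ s ξ) (s-ρ) := by
        apply intervalIntegral.integral_congr
        intro ρ hρ
        rw [Set.uIcc_of_le (by linarith : t-s-r ≤ (0:ℝ))] at hρ
        exact hidneg ρ hρ.2
      rw [e1, intervalIntegral.integral_comp_sub_left (fun ξ => psiF p κ s ξ) s,
        show s-(0:ℝ) = s by ring, show s-(t-s-r) = 2*s+r-t by ring]
    have hψint : IntervalIntegrable (fun ξ => psiF p κ s ξ) volume s (t+r) :=
      (psiF_cont' p κ s).intervalIntegrable _ _
    have hBle : (∫ ξ in s..(2*s+r-t), psiF p κ s ξ) ≤ ∫ ξ in s..(t+r), psiF p κ s ξ := by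
      apply ii_ext (by linarith) (by linarith) hψint
      intro u hu
      exact psiF_nonneg hu.1
    rw [eA, eB]
    linarith

lemma psiF_cont2 (p κ : ℝ) : Continuous (fun q : ℝ × ℝ => psiF p κ q.1 q.2) := by
  unfold psiF
  apply Continuous.mul
  apply Continuous.mul
  · apply Continuous.rpow_const (continuous_const.add continuous_snd.abs)
    intro x; exact Or.inl (by simp only [Pi.add_apply, Pi.sub_apply, Pi.mul_apply, id]; positivity)
  · apply Continuous.rpow_const
      (continuous_const.add ((continuous_const.mul continuous_fst).sub continuous_snd).abs)
    intro x; exact Or.inl (by simp only [Pi.add_apply, Pi.sub_apply, Pi.mul_apply, id]; positivity)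
  · exact continuous_const.add (continuous_snd.sub continuous_fst)

lemma core {p κ t r : ℝ} (hp1 : 1 < p) (hκ1 : 1 < κ) {C : ℝ} (hC0 : 0 < C)
    (hC : ∀ ξ : ℝ, 0 ≤ ξ →
      (∫ η in (-ξ)..ξ, (1+|ξ-η|)^(-(p-1)) * (1+|η|)^(-(p*(κ-1))))
        ≤ C * (1+ξ)^(-(κ+1-p)))
    (ht : 0 ≤ t) (hr : 0 ≤ r) :
    I0 p κ t r ≤ (2 * (2^(p-1) * C)) * ∫ ξ in (max (t-r) 0)..(t+r), (1+ξ)^(-κ) := by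
  set m₀ := max (t-r) 0 with hm₀
  have hm₀0 : 0 ≤ m₀ := le_max_right _ _
  have hm₀T : m₀ ≤ t+r := max_le (by linarith) (by linarith)
  set gf : ℝ → ℝ := fun s => (1+|s|)^(-(p-1)) with hgf
  have hgf0 : ∀ s, 0 ≤ gf s := fun s => Real.rpow_nonneg (by positivity) _
  have hgf1 : ∀ s, gf s ≤ 1 := fun s =>
    Real.rpow_le_one_of_one_le_of_nonpos (by linarith [abs_nonneg s]) (by linarith)
  have hgfcont : Continuous gf := by
    apply Continuous.rpow_const (continuous_const.add continuous_abs)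
    intro x; exact Or.inl (by simp only [Pi.add_apply, Pi.sub_apply, Pi.mul_apply, id]; positivity)
  set Ψ : ℝ → ℝ → ℝ := fun s ξ => if s < ξ then (2 * gf s) * psiF p κ s ξ else 0 with hΨ
  have hΨunc : Function.uncurry Ψ =
      fun q : ℝ × ℝ => if q.1 < q.2 then (2 * gf q.1) * psiF p κ q.1 q.2 else 0 := rfl
  have hΨmeas : Measurable (Function.uncurry Ψ) := by
    rw [hΨunc]
    apply Measurable.ite (measurableSet_lt measurable_fst measurable_snd)
    · exact ((continuous_const.mul (hgfcont.comp continuous_fst)).mul (psiF_cont2 p κ)).measurable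
    · exact measurable_const
  have hΨnonneg : ∀ s ξ : ℝ, 0 ≤ Ψ s ξ := by
    intro s ξ
    simp only [hΨ]
    split
    · next h => exact mul_nonneg (by positivity) (psiF_nonneg (le_of_lt h))
    · exact le_rfl
  have hΨint : Integrable (Function.uncurry Ψ)
      ((volume.restrict (Set.Ioc 0 t)).prod (volume.restrict (Set.Ioc m₀ (t+r)))) := by
    apply Integrable.mono' (integrable_const (2 * (1+(t+r)))) hΨmeas.aestronglyMeasurable
    rw [Measure.prod_restrict, ae_restrict_iff' (measurableSet_Ioc.prod measurableSet_Ioc)]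
    apply ae_of_all
    rintro ⟨s, ξ⟩ ⟨hs, hξ⟩
    simp only [Set.mem_Ioc] at hs hξ
    rw [hΨunc, Real.norm_eq_abs]
    simp only []
    split
    · next hlt =>
      have hψ0 : 0 ≤ psiF p κ s ξ := psiF_nonneg (le_of_lt hlt)
      have hψle : psiF p κ s ξ ≤ 1 + (t+r) := by
        unfold psiF
        have e1 : (1+|ξ|)^(-p) ≤ 1 :=
          Real.rpow_le_one_of_one_le_of_nonpos (by linarith [abs_nonneg ξ]) (by linarith)
        have e2 : (1+|2*s-ξ|)^(-(p*(κ-1))) ≤ 1 := by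
          apply Real.rpow_le_one_of_one_le_of_nonpos (by linarith [abs_nonneg (2*s-ξ)])
          have : 0 < p * (κ-1) := mul_pos (by linarith) (by linarith)
          linarith
        have e3 : 1 + (ξ-s) ≤ 1 + (t+r) := by
          have := hξ.2; have := hs.1; linarith
        have e30 : 0 ≤ 1 + (ξ-s) := by linarith
        have h1 : (0:ℝ) ≤ (1+|ξ|)^(-p) := Real.rpow_nonneg (by positivity) _
        have h2 : (0:ℝ) ≤ (1+|2*s-ξ|)^(-(p*(κ-1))) := Real.rpow_nonneg (by positivity) _
        calc (1+|ξ|)^(-p) * (1+|2*s-ξ|)^(-(p*(κ-1))) * (1+(ξ-s))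
            ≤ 1 * 1 * (1 + (t+r)) := by
              apply mul_le_mul (mul_le_mul e1 e2 h2 (by norm_num)) e3 e30 (by norm_num)
          _ = 1 + (t+r) := by ring
      rw [abs_of_nonneg (mul_nonneg (by positivity) hψ0)]
      calc (2 * gf s) * psiF p κ s ξ ≤ 2 * (1 + (t+r)) := by
            apply mul_le_mul ?_ hψle hψ0 (by norm_num)
            have := hgf1 s; linarith
        _ = 2 * (1+(t+r)) := by ring
    · rw [abs_zero]; positivity
  have hI0 : I0 p κ t r = ∫ s in Set.Ioc 0 t, ((1+|s|)^(-(p-1)) *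
      ∫ ρ in (t-s-r)..(t-s+r),
        (1+|s + abs ρ|)^(-p) * (1+|s - abs ρ|)^(-(p*(κ-1))) * (1+|ρ|)) := by
    unfold I0
    rw [intervalIntegral.integral_of_le ht]
  have hF1int : Integrable (fun s => ∫ ξ in Set.Ioc m₀ (t+r), Ψ s ξ)
      (volume.restrict (Set.Ioc 0 t)) := hΨint.integral_prod_left
  have step2 : I0 p κ t r ≤ ∫ s in Set.Ioc 0 t, (∫ ξ in Set.Ioc m₀ (t+r), Ψ s ξ) := by
    rw [hI0]
    apply si_mono measurableSet_Ioc hF1int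
    · intro s _
      exact integral_nonneg (fun ξ => hΨnonneg s ξ)
    · intro s hs
      obtain ⟨hs0, hst⟩ := hs
      have hms : max (t-r) s ≤ t+r := max_le (by linarith) (by linarith)
      have hrew : (∫ ξ in Set.Ioc m₀ (t+r), Ψ s ξ)
          = (2 * gf s) * ∫ ξ in (max (t-r) s)..(t+r), psiF p κ s ξ := by
        have hfun : (fun ξ => Ψ s ξ)
            = Set.indicator (Set.Ioi s) (fun ξ => (2 * gf s) * psiF p κ s ξ) := by
          funext ξ
          simp only [hΨ, Set.indicator, Set.mem_Ioi]
        rw [hfun, setIntegral_indicator measurableSet_Ioi, Set.Ioc_inter_Ioi]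
        have hmax' : m₀ ⊔ s = max (t-r) s := by
          rw [hm₀, max_assoc]
          congr 1
          exact max_eq_right (le_of_lt hs0)
        rw [hmax', ← intervalIntegral.integral_of_le hms,
          intervalIntegral.integral_const_mul]
      rw [hrew]
      have hclaim := claim1 (p := p) (κ := κ) (le_of_lt hs0) hst hr
      calc (1+|s|)^(-(p-1)) * ∫ ρ in (t-s-r)..(t-s+r),
            (1+|s + abs ρ|)^(-p) * (1+|s - abs ρ|)^(-(p*(κ-1))) * (1+|ρ|)
          ≤ (1+|s|)^(-(p-1)) * (2 * ∫ ξ in (max (t-r) s)..(t+r), psiF p κ s ξ) :=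
            mul_le_mul_of_nonneg_left hclaim (hgf0 s)
        _ = (2 * gf s) * ∫ ξ in (max (t-r) s)..(t+r), psiF p κ s ξ := by
            rw [hgf]; ring
  have step3 : (∫ s in Set.Ioc 0 t, ∫ ξ in Set.Ioc m₀ (t+r), Ψ s ξ)
      = ∫ ξ in Set.Ioc m₀ (t+r), ∫ s in Set.Ioc 0 t, Ψ s ξ :=
    MeasureTheory.integral_integral_swap hΨint
  have hκint : IntegrableOn (fun ξ : ℝ => (1+ξ)^(-κ)) (Set.Ioc m₀ (t+r)) volume := by
    apply (ContinuousOn.integrableOn_compact (isCompact_Icc (a := m₀) (b := t+r)) ?_).mono_set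
      Set.Ioc_subset_Icc_self
    apply ContinuousOn.rpow_const (continuousOn_const.add continuousOn_id)
    intro x hx
    exact Or.inl (by simp only [Pi.add_apply, id]; intro hcon; have := hx.1; linarith)
  have step4 : (∫ ξ in Set.Ioc m₀ (t+r), ∫ s in Set.Ioc 0 t, Ψ s ξ)
      ≤ ∫ ξ in Set.Ioc m₀ (t+r), (2 * (2^(p-1) * C)) * (1+ξ)^(-κ) := by
    apply si_mono measurableSet_Ioc (hκint.const_mul _)
    · intro ξ hξ
      have : 0 ≤ ξ := le_trans hm₀0 (le_of_lt hξ.1)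
      positivity
    · intro ξ hξ
      obtain ⟨hξ1, hξ2⟩ := hξ
      have hξ0 : 0 ≤ ξ := le_trans hm₀0 (le_of_lt hξ1)
      have hfun : (fun s => Ψ s ξ)
          = Set.indicator (Set.Iio ξ) (fun s => (2 * gf s) * psiF p κ s ξ) := by
        funext s
        simp only [hΨ, Set.indicator, Set.mem_Iio]
      rw [hfun, setIntegral_indicator measurableSet_Iio]
      have hfint : IntegrableOn (fun s => (2 * gf s) * psiF p κ s ξ) (Set.Ioc 0 ξ) volume :=
        (((continuous_const.mul hgfcont).mul (psiF_cont p κ ξ)).integrableOn_Ioc)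
      have hnonneg : 0 ≤ᵐ[volume.restrict (Set.Ioc 0 ξ)]
          (fun s => (2 * gf s) * psiF p κ s ξ) := by
        filter_upwards [ae_restrict_mem measurableSet_Ioc] with s hs
        exact mul_nonneg (by positivity) (psiF_nonneg hs.2)
      have hsub : Set.Ioc 0 t ∩ Set.Iio ξ ⊆ Set.Ioc 0 ξ := by
        rintro x ⟨⟨h1, h2⟩, h3⟩
        exact ⟨h1, le_of_lt h3⟩
      have hmono := setIntegral_mono_set hfint hnonneg (HasSubset.Subset.eventuallyLE hsub)
      calc (∫ s in Set.Ioc 0 t ∩ Set.Iio ξ, (2 * gf s) * psiF p κ s ξ)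
          ≤ ∫ s in Set.Ioc 0 ξ, (2 * gf s) * psiF p κ s ξ := hmono
        _ = ∫ s in (0:ℝ)..ξ, (2 * gf s) * psiF p κ s ξ :=
            (intervalIntegral.integral_of_le hξ0).symm
        _ = 2 * ∫ s in (0:ℝ)..ξ, (1+|s|)^(-(p-1)) * psiF p κ s ξ := by
            rw [← intervalIntegral.integral_const_mul]
            apply intervalIntegral.integral_congr
            intro x _
            simp only [hgf]
            ring
        _ ≤ 2 * ((2^(p-1) * C) * (1+ξ)^(-κ)) := by
            have := Kxi_bound hp1 hC0 hC ξ hξ0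
            linarith
        _ = (2 * (2^(p-1) * C)) * (1+ξ)^(-κ) := by ring
  have step5 : (∫ ξ in Set.Ioc m₀ (t+r), (2 * (2^(p-1) * C)) * (1+ξ)^(-κ))
      = (2 * (2^(p-1) * C)) * ∫ ξ in m₀..(t+r), (1+ξ)^(-κ) := by
    rw [← intervalIntegral.integral_of_le hm₀T, intervalIntegral.integral_const_mul]
  calc I0 p κ t r ≤ _ := step2
    _ = _ := step3
    _ ≤ _ := step4
    _ = _ := step5


end Aux

/-- Estimates for `I₀`: `I₀(t,r) ≲ r⟨t+r⟩^{-κ}` if `t ≥ 2r` or `r ≤ 1`, and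
`I₀(t,r) ≲ ⟨t-r⟩^{-(κ-1)}` if `r ≤ t ≤ 2r` and `r ≥ 1`. -/
theorem stmt13 (p κ : ℝ) (hp : (3 + Real.sqrt 17) / 4 < p)
    (hκ1 : p < 2 → (3 - p) / (p - 1) ≤ κ ∧ κ ≤ 2 * (p - 1))
    (hκ2 : 2 ≤ p → 1 < κ ∧ κ ≤ 2 * (p - 1)) :
    ∃ C > (0:ℝ), ∀ t ≥ (0:ℝ), ∀ r ≥ (0:ℝ),
      ((2 * r ≤ t ∨ r ≤ 1) → I0 p κ t r ≤ C * r * (1 + |t + r|) ^ (-κ))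
      ∧ (r ≤ t → t ≤ 2 * r → 1 ≤ r → I0 p κ t r ≤ C * (1 + |t - r|) ^ (-(κ - 1))) := by
  have hs17 : Real.sqrt 17 > 4 := by
    nlinarith [Real.sq_sqrt (show (0:ℝ) ≤ 17 by norm_num), Real.sqrt_nonneg 17]
  have hp1 : 1 < p := by nlinarith
  have hκgt1 : 1 < κ := by
    rcases lt_or_ge p 2 with h | h
    · have h1 := (hκ1 h).1
      have h2 : 1 < (3 - p) / (p - 1) := by rw [lt_div_iff₀ (by linarith)]; linarith
      linarith
    · exact (hκ2 h).1
  have hκ0 : 0 ≤ κ := by linarith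
  obtain ⟨C, hC0, hC⟩ := conv_main hp hκ1 hκ2
  set Cκ := 2 * (2^(p-1) * C) with hCκ
  have hCκ0 : 0 < Cκ := by positivity
  set C1 := Cκ * (2 * 3^κ) with hC1
  set C2 := Cκ * (2 * 4^κ) with hC2
  set C3 := Cκ * (1/(κ-1)) with hC3
  have hC10 : 0 < C1 := by
    apply mul_pos hCκ0
    positivity
  have hC20 : 0 < C2 := by
    apply mul_pos hCκ0
    positivity
  have hC30 : 0 < C3 := by
    apply mul_pos hCκ0
    rw [one_div]
    have : (0:ℝ) < κ - 1 := by linarith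
    positivity
  refine ⟨C1 + C2 + C3, by linarith, fun t ht r hr => ?_⟩
  have hcore := core hp1 hκgt1 hC0 hC ht hr
  set m₀ := max (t-r) 0 with hm₀
  have hm₀0 : 0 ≤ m₀ := le_max_right _ _
  have hm₀T : m₀ ≤ t+r := max_le (by linarith) (by linarith)
  have hm₀ge : t - r ≤ m₀ := le_max_left _ _
  set E := ∫ ξ in m₀..(t+r), (1+ξ)^(-κ) with hE
  have hEsup : E ≤ 2*r * (1+m₀)^(-κ) := by
    have h1 : E ≤ ((t+r) - m₀) * (1+m₀)^(-κ) := by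
      have hmono : E ≤ ∫ _ in m₀..(t+r), (1+m₀)^(-κ) := by
        apply intervalIntegral.integral_mono_on hm₀T (one_add_rpow_intInt hm₀0 hm₀T)
          intervalIntegrable_const
        intro x hx
        exact Real.rpow_le_rpow_of_nonpos (by linarith) (by linarith [hx.1]) (by linarith)
      rwa [intervalIntegral.integral_const, smul_eq_mul] at hmono
    have h2 : ((t+r) - m₀) * (1+m₀)^(-κ) ≤ 2*r * (1+m₀)^(-κ) := by
      apply mul_le_mul_of_nonneg_right (by linarith) (Real.rpow_nonneg (by linarith) _)
    linarith
  constructor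
  · -- part 1
    intro hcase
    rw [abs_of_nonneg (by linarith : (0:ℝ) ≤ t + r)]
    have hrpowpos : (0:ℝ) < (1+(t+r))^(-κ) := Real.rpow_pos_of_pos (by linarith) _
    rcases le_or_gt (2*r) t with h2rt | h2rt
    · -- t ≥ 2r
      have hm₀eq : m₀ = t - r := max_eq_left (by linarith)
      have hkey : 1+(t+r) ≤ 3*(1+(t-r)) := by linarith
      have hA : (0:ℝ) < (1+(t-r))^κ := Real.rpow_pos_of_pos (by linarith) _
      have hB : (0:ℝ) < (1+(t+r))^κ := Real.rpow_pos_of_pos (by linarith) _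
      have hAB : (1+(t+r))^κ ≤ 3^κ * (1+(t-r))^κ := by
        rw [← Real.mul_rpow (by norm_num) (by linarith)]
        exact Real.rpow_le_rpow (by linarith) hkey hκ0
      have hm₀κ : (1+m₀)^(-κ) ≤ 3^κ * (1+(t+r))^(-κ) := by
        rw [hm₀eq, Real.rpow_neg (by linarith), Real.rpow_neg (by linarith)]
        rw [inv_eq_one_div, inv_eq_one_div, mul_one_div, div_le_div_iff₀ hA hB]
        calc 1 * (1+(t+r))^κ = (1+(t+r))^κ := by ring
          _ ≤ 3^κ * (1+(t-r))^κ := hAB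
      calc I0 p κ t r ≤ Cκ * E := hcore
        _ ≤ Cκ * (2*r * (3^κ * (1+(t+r))^(-κ))) := by
            have hstep : E ≤ 2*r * (3^κ * (1+(t+r))^(-κ)) := by
              have := mul_le_mul_of_nonneg_left hm₀κ (by linarith : (0:ℝ) ≤ 2*r)
              linarith
            exact mul_le_mul_of_nonneg_left hstep (le_of_lt hCκ0)
        _ = C1 * r * (1+(t+r))^(-κ) := by rw [hC1]; ring
        _ ≤ (C1 + C2 + C3) * r * (1+(t+r))^(-κ) := by
            apply mul_le_mul_of_nonneg_right ?_ (le_of_lt hrpowpos)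
            apply mul_le_mul_of_nonneg_right ?_ hr
            linarith
    · -- t < 2r, so r ≤ 1
      have hr1 : r ≤ 1 := by
        rcases hcase with h | h
        · linarith
        · exact h
      have hm₀κ : (1+m₀)^(-κ) ≤ 1 :=
        Real.rpow_le_one_of_one_le_of_nonpos (by linarith) (by linarith)
      have hE2r : E ≤ 2*r := by
        have h1 : 2*r * (1+m₀)^(-κ) ≤ 2*r * 1 :=
          mul_le_mul_of_nonneg_left hm₀κ (by linarith)
        linarith
      have h4 : (4:ℝ)^(-κ) ≤ (1+(t+r))^(-κ) :=
        Real.rpow_le_rpow_of_nonpos (by linarith) (by linarith) (by linarith)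
      have h4id : (4:ℝ)^κ * (4:ℝ)^(-κ) = 1 := by
        rw [← Real.rpow_add (by norm_num)]
        norm_num
      calc I0 p κ t r ≤ Cκ * E := hcore
        _ ≤ Cκ * (2*r) := mul_le_mul_of_nonneg_left hE2r (le_of_lt hCκ0)
        _ = C2 * r * (4:ℝ)^(-κ) := by
            rw [hC2]
            have : C2 * r * (4:ℝ)^(-κ) = Cκ * (2*r) * ((4:ℝ)^κ * (4:ℝ)^(-κ)) := by
              rw [hC2]; ring
            rw [hC2] at this
            rw [this, h4id, mul_one]
        _ ≤ C2 * r * (1+(t+r))^(-κ) := by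
            apply mul_le_mul_of_nonneg_left h4 (by positivity)
        _ ≤ (C1 + C2 + C3) * r * (1+(t+r))^(-κ) := by
            apply mul_le_mul_of_nonneg_right ?_ (le_of_lt hrpowpos)
            apply mul_le_mul_of_nonneg_right ?_ hr
            linarith
  · -- part 2
    intro hrt ht2r hr1
    have htr0 : 0 ≤ t - r := by linarith
    have hm₀eq : m₀ = t - r := max_eq_left (by linarith)
    rw [abs_of_nonneg htr0, show -(κ-1) = 1-κ by ring]
    have hEtail : E ≤ (1+(t-r))^(1-κ)/(κ-1) := by
      rw [hE, hm₀eq]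
      exact int_tail_bound hκgt1 htr0 (by linarith)
    have hrpow0 : (0:ℝ) ≤ (1+(t-r))^(1-κ) := Real.rpow_nonneg (by linarith) _
    calc I0 p κ t r ≤ Cκ * E := hcore
      _ ≤ Cκ * ((1+(t-r))^(1-κ)/(κ-1)) := mul_le_mul_of_nonneg_left hEtail (le_of_lt hCκ0)
      _ = C3 * (1+(t-r))^(1-κ) := by rw [hC3]; ring
      _ ≤ (C1 + C2 + C3) * (1+(t-r))^(1-κ) := by
          apply mul_le_mul_of_nonneg_right ?_ hrpow0
          linarith
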